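/- If A and B are real n₁×n₂ matrices satisfying A Bᵀ = 0 and Aᵀ B = 0, then the nuclear norm is additive: ‖A + B‖_* = ‖A‖_* + ‖B‖_*. -/

import Mathlib

open Matrix
noncomputable def nuclearNorm {n₁ n₂ : ℕ} (A : Matrix (Fin n₁) (Fin n₂) ℝ) : ℝ :=
  ∑ i, Real.sqrt ((show (Aᵀ * A).IsHermitian by
    simpa using Matrix.isHermitian_conjTranspose_mul_self A).eigenvalues i)

section sqrtPort
open scoped MatrixOrder

noncomputable def Matrix.PosSemidef.sqrt {n : ℕ} {M : Matrix (Fin n) (Fin n) ℝ}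
    (hM : M.PosSemidef) : Matrix (Fin n) (Fin n) ℝ :=
  hM.1.eigenvectorUnitary.1 * diagonal ((RCLike.ofReal : ℝ → ℝ) ∘ (fun x => Real.sqrt x) ∘ hM.1.eigenvalues) *
    (star hM.1.eigenvectorUnitary.1 : Matrix (Fin n) (Fin n) ℝ)

lemma Matrix.PosSemidef.sqrt_eq_cfcSqrt {n : ℕ} {M : Matrix (Fin n) (Fin n) ℝ}
    (hM : M.PosSemidef) : hM.sqrt = CFC.sqrt M := by
  rw [CFC.sqrt_eq_cfc, cfc_nnreal_eq_real _ M, hM.1.cfc_eq]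
  simp only [IsHermitian.cfc, Matrix.PosSemidef.sqrt]
  congr 2
  ext i j
  simp [diagonal_apply, Real.coe_toNNReal', max_eq_left (hM.eigenvalues_nonneg i)]

lemma Matrix.PosSemidef.posSemidef_sqrt {n : ℕ} {M : Matrix (Fin n) (Fin n) ℝ}
    (hM : M.PosSemidef) : hM.sqrt.PosSemidef := by
  rw [hM.sqrt_eq_cfcSqrt]
  exact Matrix.nonneg_iff_posSemidef.mp (CFC.sqrt_nonneg M)

lemma Matrix.PosSemidef.sqrt_mul_self {n : ℕ} {M : Matrix (Fin n) (Fin n) ℝ}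
    (hM : M.PosSemidef) : hM.sqrt * hM.sqrt = M := by
  rw [hM.sqrt_eq_cfcSqrt]
  exact CFC.sqrt_mul_sqrt_self M hM.nonneg

lemma Matrix.PosSemidef.eq_sqrt_of_sq_eq {n : ℕ} {M N : Matrix (Fin n) (Fin n) ℝ}
    (hM : M.PosSemidef) (hN : N.PosSemidef) (h : M ^ 2 = N) : M = hN.sqrt := by
  rw [hN.sqrt_eq_cfcSqrt, eq_comm, CFC.sqrt_eq_iff _ _ hN.nonneg hM.nonneg, ← sq]
  exact h

end sqrtPort

lemma trace_sqrt {n : ℕ} {M : Matrix (Fin n) (Fin n) ℝ} (hM : M.PosSemidef) :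
    hM.sqrt.trace = ∑ i, Real.sqrt (hM.1.eigenvalues i) := by
  rw [Matrix.PosSemidef.sqrt, Matrix.trace_mul_cycle]
  have h1 : (star hM.1.eigenvectorUnitary.1 : Matrix (Fin n) (Fin n) ℝ) *
      hM.1.eigenvectorUnitary.1 = 1 := hM.1.eigenvectorUnitary.2.1
  rw [h1, Matrix.one_mul, Matrix.trace_diagonal]
  simp

lemma sqrt_mul_eq_zero {n : ℕ} {M N : Matrix (Fin n) (Fin n) ℝ}
    (hM : M.PosSemidef) (h : M * N = 0) : hM.sqrt * N = 0 := by
  have hS := hM.posSemidef_sqrt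
  have hSN : (hM.sqrt * N)ᴴ * (hM.sqrt * N) = 0 := by
    rw [Matrix.conjTranspose_mul, hS.1.eq, ← Matrix.mul_assoc, Matrix.mul_assoc _ hM.sqrt hM.sqrt,
      hM.sqrt_mul_self, Matrix.mul_assoc, h]
    simp
  exact Matrix.conjTranspose_mul_self_eq_zero.mp hSN

/-- If A Bᵀ = 0 and Aᵀ B = 0, the nuclear norm is additive. -/
theorem nuclearNorm_add_of_orthogonal {n₁ n₂ : ℕ}
    (A B : Matrix (Fin n₁) (Fin n₂) ℝ)
    (h₁ : A * Bᵀ = 0) (h₂ : Aᵀ * B = 0) :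
    nuclearNorm (A + B) = nuclearNorm A + nuclearNorm B := by
  have hconj : ∀ (C : Matrix (Fin n₁) (Fin n₂) ℝ), Cᴴ = Cᵀ := fun C => by
    ext i j; simp [Matrix.conjTranspose_apply, Matrix.transpose_apply]
  have hP : (Aᴴ * A).PosSemidef := Matrix.posSemidef_conjTranspose_mul_self A
  have hQ : (Bᴴ * B).PosSemidef := Matrix.posSemidef_conjTranspose_mul_self B
  have hR : ((A + B)ᴴ * (A + B)).PosSemidef := Matrix.posSemidef_conjTranspose_mul_self (A + B)
  -- B ᵀ A = 0
  have h₃ : Bᵀ * A = 0 := by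
    have := congrArg Matrix.transpose h₂
    simpa [Matrix.transpose_mul] using this
  have hsum : (A + B)ᴴ * (A + B) = Aᴴ * A + Bᴴ * B := by
    rw [hconj, hconj, hconj, Matrix.transpose_add, Matrix.add_mul, Matrix.mul_add,
      Matrix.mul_add, h₂, h₃]
    simp
  -- orthogonality of the Gram matrices
  have hPQ : (Aᴴ * A) * (Bᴴ * B) = 0 := by
    rw [hconj, hconj, Matrix.mul_assoc, ← Matrix.mul_assoc A, h₁]
    simp
  have h₄ : B * Aᵀ = 0 := by
    have := congrArg Matrix.transpose h₁
    simpa [Matrix.transpose_mul] using this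
  have hQP : (Bᴴ * B) * (Aᴴ * A) = 0 := by
    rw [hconj, hconj, Matrix.mul_assoc, ← Matrix.mul_assoc B, h₄]
    simp
  -- sqrt P * sqrt Q = 0 and sqrt Q * sqrt P = 0
  have hSQ : hP.sqrt * (Bᴴ * B) = 0 := sqrt_mul_eq_zero hP hPQ
  have hQS : (Bᴴ * B) * hP.sqrt = 0 := by
    have := congrArg Matrix.conjTranspose hSQ
    rwa [Matrix.conjTranspose_mul, Matrix.conjTranspose_zero, hP.posSemidef_sqrt.1.eq,
      hQ.1.eq] at this
  have hTS : hQ.sqrt * hP.sqrt = 0 := sqrt_mul_eq_zero hQ hQS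
  have hST : hP.sqrt * hQ.sqrt = 0 := by
    have := congrArg Matrix.conjTranspose hTS
    rwa [Matrix.conjTranspose_mul, Matrix.conjTranspose_zero, hP.posSemidef_sqrt.1.eq,
      hQ.posSemidef_sqrt.1.eq] at this
  -- sqrt of the sum
  have hsq : (hP.sqrt + hQ.sqrt) ^ 2 = (A + B)ᴴ * (A + B) := by
    rw [hsum, pow_two, Matrix.add_mul, Matrix.mul_add, Matrix.mul_add, hST, hTS,
      hP.sqrt_mul_self, hQ.sqrt_mul_self]
    simp [add_comm]
  have hsqrt_add : hP.sqrt + hQ.sqrt = hR.sqrt :=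
    Matrix.PosSemidef.eq_sqrt_of_sq_eq (hP.posSemidef_sqrt.add hQ.posSemidef_sqrt) hR hsq
  have key : hR.sqrt.trace = hP.sqrt.trace + hQ.sqrt.trace := by
    rw [← hsqrt_add, Matrix.trace_add]
  unfold nuclearNorm
  erw [← trace_sqrt hP, ← trace_sqrt hQ, ← trace_sqrt hR, key]
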